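/- Let a > 0 be a real constant and let u, f : ℝ² → ℝ be such that on an open neighborhood of a point (x₀,y₀), u is eight times continuously differentiable, f is six times continuously differentiable, and a·(∂²u/∂x² + ∂²u/∂y²) = −f. Define the 9-point stencil coefficients C₀,₀ = 20, C₀,±1 = C±1,₀ = −4, C±1,±1 = −1, and for h > 0 set F(h) := 6·f(x₀,y₀) + (h²/2)·(f^(2,0)(x₀,y₀) + f^(0,2)(x₀,y₀)) + (h⁴/60)·(f^(4,0)(x₀,y₀) + f^(0,4)(x₀,y₀)) + (h⁴/15)·f^(2,2)(x₀,y₀). Then there exist C > 0 and h₀ > 0 such that for all h ∈ (0,h₀], |∑_{k=−1}^{1} ∑_{ℓ=−1}^{1} C_{k,ℓ}·u(x₀+kh, y₀+ℓh) − (h²/a)·F(h)| ≤ C·h⁸; that is, the compact 9-point finite difference scheme h⁻²·∑_{k,ℓ} C_{k,ℓ}·u_h = F/a has sixth order of consistency at (x₀,y₀) for the equation −∇·(a∇u) = f with constant a. -/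

import Mathlib

open Finset

/-- partial derivative in `x`. -/
noncomputable def pdx (v : ℝ → ℝ → ℝ) : ℝ → ℝ → ℝ := fun x y => deriv (fun t => v t y) x
/-- partial derivative in `y`. -/
noncomputable def pdy (v : ℝ → ℝ → ℝ) : ℝ → ℝ → ℝ := fun x y => deriv (fun t => v x t) y
/-- mixed partial derivative `∂^{m+n} v / ∂x^m ∂y^n`. -/
noncomputable def pd (m n : ℕ) (v : ℝ → ℝ → ℝ) : ℝ → ℝ → ℝ := pdx^[m] (pdy^[n] v)

/-- the interior 9-point stencil coefficients. -/
noncomputable def C0 : ℤ → ℤ → ℝ := fun k l =>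
  if k = 0 ∧ l = 0 then 20 else if k = 0 ∨ l = 0 then -4 else -1

set_option maxHeartbeats 4000000

open Function Set

section tool
variable {U : Set (ℝ × ℝ)} {w v : ℝ → ℝ → ℝ}

lemma slice_x {x y : ℝ} (hw : DifferentiableAt ℝ (uncurry w) (x, y)) :
    HasDerivAt (fun t => w t y) (fderiv ℝ (uncurry w) (x, y) (1, 0)) x := by
  have h1 : HasDerivAt (fun t : ℝ => ((t, y) : ℝ × ℝ)) ((1 : ℝ), (0 : ℝ)) x :=
    (hasDerivAt_id x).prodMk (hasDerivAt_const x y)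
  exact hw.hasFDerivAt.comp_hasDerivAt x h1

lemma slice_y {x y : ℝ} (hw : DifferentiableAt ℝ (uncurry w) (x, y)) :
    HasDerivAt (fun t => w x t) (fderiv ℝ (uncurry w) (x, y) (0, 1)) y := by
  have h1 : HasDerivAt (fun t : ℝ => ((x, t) : ℝ × ℝ)) ((0 : ℝ), (1 : ℝ)) y :=
    (hasDerivAt_const y x).prodMk (hasDerivAt_id y)
  exact hw.hasFDerivAt.comp_hasDerivAt y h1

lemma diffAt_of_C1 (hU : IsOpen U) (hw : ContDiffOn ℝ 1 (uncurry w) U)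
    {p : ℝ × ℝ} (hp : p ∈ U) : DifferentiableAt ℝ (uncurry w) p :=
  (hw.differentiableOn one_ne_zero).differentiableAt (hU.mem_nhds hp)

lemma hasDerivAt_pdx (hU : IsOpen U) (hw : ContDiffOn ℝ 1 (uncurry w) U)
    {x y : ℝ} (hp : (x, y) ∈ U) : HasDerivAt (fun t => w t y) (pdx w x y) x := by
  have H := slice_x (w := w) (x := x) (y := y) (diffAt_of_C1 hU hw hp)
  have : pdx w x y = fderiv ℝ (uncurry w) (x, y) (1, 0) := H.deriv
  rwa [this]

lemma hasDerivAt_pdy (hU : IsOpen U) (hw : ContDiffOn ℝ 1 (uncurry w) U)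
    {x y : ℝ} (hp : (x, y) ∈ U) : HasDerivAt (fun t => w x t) (pdy w x y) y := by
  have H := slice_y (w := w) (x := x) (y := y) (diffAt_of_C1 hU hw hp)
  have : pdy w x y = fderiv ℝ (uncurry w) (x, y) (0, 1) := H.deriv
  rwa [this]

lemma contDiffOn_pdx (hU : IsOpen U) {j : ℕ} (hw : ContDiffOn ℝ (j + 1) (uncurry w) U) :
    ContDiffOn ℝ j (uncurry (pdx w)) U := by
  have hd : ContDiffOn ℝ j (fderiv ℝ (uncurry w)) U :=
    hw.fderiv_of_isOpen hU (by exact_mod_cast le_rfl)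
  have h2 : ContDiffOn ℝ j (fun p => fderiv ℝ (uncurry w) p ((1 : ℝ), (0 : ℝ))) U :=
    (ContinuousLinearMap.apply ℝ ℝ ((1 : ℝ), (0 : ℝ))).contDiff.comp_contDiffOn hd
  refine h2.congr fun p hp => ?_
  have hdiff : DifferentiableAt ℝ (uncurry w) (p.1, p.2) := by
    rw [Prod.mk.eta]
    exact diffAt_of_C1 hU (hw.of_le (by exact_mod_cast by omega)) hp
  have := (slice_x (w := w) (x := p.1) (y := p.2) hdiff).deriv
  simpa [Function.uncurry, pdx, Prod.mk.eta] using this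

lemma contDiffOn_pdy (hU : IsOpen U) {j : ℕ} (hw : ContDiffOn ℝ (j + 1) (uncurry w) U) :
    ContDiffOn ℝ j (uncurry (pdy w)) U := by
  have hd : ContDiffOn ℝ j (fderiv ℝ (uncurry w)) U :=
    hw.fderiv_of_isOpen hU (by exact_mod_cast le_rfl)
  have h2 : ContDiffOn ℝ j (fun p => fderiv ℝ (uncurry w) p ((0 : ℝ), (1 : ℝ))) U :=
    (ContinuousLinearMap.apply ℝ ℝ ((0 : ℝ), (1 : ℝ))).contDiff.comp_contDiffOn hd
  refine h2.congr fun p hp => ?_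
  have hdiff : DifferentiableAt ℝ (uncurry w) (p.1, p.2) := by
    rw [Prod.mk.eta]
    exact diffAt_of_C1 hU (hw.of_le (by exact_mod_cast by omega)) hp
  have := (slice_y (w := w) (x := p.1) (y := p.2) hdiff).deriv
  simpa [Function.uncurry, pdy, Prod.mk.eta] using this

lemma contDiffOn_pdx_iter (hU : IsOpen U) {m j : ℕ}
    (hw : ContDiffOn ℝ ((j + m : ℕ)) (uncurry w) U) :
    ContDiffOn ℝ j (uncurry (pdx^[m] w)) U := by
  induction m generalizing w with
  | zero => simpa using hw
  | succ m ih =>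
    rw [Function.iterate_succ_apply]
    refine ih ((contDiffOn_pdx (j := (j + m : ℕ)) hU (hw.of_le ?_)))
    exact_mod_cast by omega

lemma contDiffOn_pdy_iter (hU : IsOpen U) {n j : ℕ}
    (hw : ContDiffOn ℝ ((j + n : ℕ)) (uncurry w) U) :
    ContDiffOn ℝ j (uncurry (pdy^[n] w)) U := by
  induction n generalizing w with
  | zero => simpa using hw
  | succ n ih =>
    rw [Function.iterate_succ_apply]
    refine ih ((contDiffOn_pdy (j := (j + n : ℕ)) hU (hw.of_le ?_)))
    exact_mod_cast by omega

lemma contDiffOn_pd (hU : IsOpen U) {N m n j : ℕ}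
    (hw : ContDiffOn ℝ (N : ℕ) (uncurry w) U) (h : m + n + j ≤ N) :
    ContDiffOn ℝ j (uncurry (pd m n w)) U := by
  unfold pd
  refine contDiffOn_pdx_iter hU (contDiffOn_pdy_iter (j := (j + m : ℕ)) hU (hw.of_le ?_))
  exact_mod_cast by omega

lemma pdx_congrOn (hU : IsOpen U) (hvw : ∀ p ∈ U, v p.1 p.2 = w p.1 p.2)
    {x y : ℝ} (hp : (x, y) ∈ U) : pdx v x y = pdx w x y := by
  apply Filter.EventuallyEq.deriv_eq
  have hc : ContinuousAt (fun t : ℝ => ((t, y) : ℝ × ℝ)) x :=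
    (continuous_id.prodMk continuous_const).continuousAt
  filter_upwards [hc.preimage_mem_nhds (hU.mem_nhds hp)] with t ht
  exact hvw _ ht

lemma pdy_congrOn (hU : IsOpen U) (hvw : ∀ p ∈ U, v p.1 p.2 = w p.1 p.2)
    {x y : ℝ} (hp : (x, y) ∈ U) : pdy v x y = pdy w x y := by
  apply Filter.EventuallyEq.deriv_eq
  have hc : ContinuousAt (fun t : ℝ => ((x, t) : ℝ × ℝ)) y :=
    (continuous_const.prodMk continuous_id).continuousAt
  filter_upwards [hc.preimage_mem_nhds (hU.mem_nhds hp)] with t ht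
  exact hvw _ ht

lemma pdx_iter_congrOn (hU : IsOpen U) {m : ℕ} (hvw : ∀ p ∈ U, v p.1 p.2 = w p.1 p.2) :
    ∀ p ∈ U, pdx^[m] v p.1 p.2 = pdx^[m] w p.1 p.2 := by
  induction m generalizing v w with
  | zero => simpa using hvw
  | succ m ih =>
    intro p hp
    rw [Function.iterate_succ_apply, Function.iterate_succ_apply]
    refine ih (fun q hq => ?_) p hp
    have := pdx_congrOn hU hvw (x := q.1) (y := q.2) (by simpa [Prod.mk.eta] using hq)
    simpa [Prod.mk.eta] using this

lemma pdy_iter_congrOn (hU : IsOpen U) {n : ℕ} (hvw : ∀ p ∈ U, v p.1 p.2 = w p.1 p.2) :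
    ∀ p ∈ U, pdy^[n] v p.1 p.2 = pdy^[n] w p.1 p.2 := by
  induction n generalizing v w with
  | zero => simpa using hvw
  | succ n ih =>
    intro p hp
    rw [Function.iterate_succ_apply, Function.iterate_succ_apply]
    refine ih (fun q hq => ?_) p hp
    have := pdy_congrOn hU hvw (x := q.1) (y := q.2) (by simpa [Prod.mk.eta] using hq)
    simpa [Prod.mk.eta] using this

lemma schwarz (hU : IsOpen U) (hw : ContDiffOn ℝ 2 (uncurry w) U)
    {x y : ℝ} (hp : (x, y) ∈ U) : pdx (pdy w) x y = pdy (pdx w) x y := by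
  set G := uncurry w with hG
  have hdAt : ∀ q ∈ U, DifferentiableAt ℝ G q := fun q hq =>
    (hw.differentiableOn (by norm_num)).differentiableAt (hU.mem_nhds hq)
  have hev : ∀ᶠ q in nhds ((x : ℝ), y), HasFDerivAt G (fderiv ℝ G q) q := by
    filter_upwards [hU.mem_nhds hp] with q hq
    exact (hdAt q hq).hasFDerivAt
  have hd1 : ContDiffOn ℝ 1 (fderiv ℝ G) U := hw.fderiv_of_isOpen hU (by norm_num)
  have hx : HasFDerivAt (fderiv ℝ G) (fderiv ℝ (fderiv ℝ G) (x, y)) (x, y) :=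
    ((hd1.differentiableOn one_ne_zero).differentiableAt (hU.mem_nhds hp)).hasFDerivAt
  set f'' := fderiv ℝ (fderiv ℝ G) (x, y) with hf''
  have sym := second_derivative_symmetric_of_eventually hev hx ((1 : ℝ), (0 : ℝ)) (0, 1)
  -- LHS
  have hlinex : HasDerivAt (fun t : ℝ => ((t, y) : ℝ × ℝ)) ((1 : ℝ), (0 : ℝ)) x :=
    (hasDerivAt_id x).prodMk (hasDerivAt_const x y)
  have hliney : HasDerivAt (fun t : ℝ => ((x, t) : ℝ × ℝ)) ((0 : ℝ), (1 : ℝ)) y :=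
    (hasDerivAt_const y x).prodMk (hasDerivAt_id y)
  have H1 : HasDerivAt (fun t => fderiv ℝ G (t, y)) (f'' (1, 0)) x :=
    hx.comp_hasDerivAt x hlinex
  have H2 : HasDerivAt (fun t => fderiv ℝ G (t, y) (0, 1)) (f'' (1, 0) (0, 1)) x := by
    simpa using H1.clm_apply (hasDerivAt_const x ((0 : ℝ), (1 : ℝ)))
  have hL : pdx (pdy w) x y = f'' (1, 0) (0, 1) := by
    rw [← H2.deriv]
    apply Filter.EventuallyEq.deriv_eq
    have hc : ContinuousAt (fun t : ℝ => ((t, y) : ℝ × ℝ)) x :=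
      (continuous_id.prodMk continuous_const).continuousAt
    filter_upwards [hc.preimage_mem_nhds (hU.mem_nhds hp)] with t ht
    exact (slice_y (hdAt _ ht)).deriv
  have H1' : HasDerivAt (fun t => fderiv ℝ G (x, t)) (f'' (0, 1)) y :=
    hx.comp_hasDerivAt y hliney
  have H2' : HasDerivAt (fun t => fderiv ℝ G (x, t) (1, 0)) (f'' (0, 1) (1, 0)) y := by
    simpa using H1'.clm_apply (hasDerivAt_const y ((1 : ℝ), (0 : ℝ)))
  have hR : pdy (pdx w) x y = f'' (0, 1) (1, 0) := by
    rw [← H2'.deriv]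
    apply Filter.EventuallyEq.deriv_eq
    have hc : ContinuousAt (fun t : ℝ => ((x, t) : ℝ × ℝ)) y :=
      (continuous_const.prodMk continuous_id).continuousAt
    filter_upwards [hc.preimage_mem_nhds (hU.mem_nhds hp)] with t ht
    exact (slice_x (hdAt _ ht)).deriv
  rw [hL, hR, sym]

/-- commute a single pdy past pdx iterates -/
lemma pdy_pdx_iter (hU : IsOpen U) {m : ℕ}
    (hw : ContDiffOn ℝ ((m + 2 : ℕ)) (uncurry w) U) :
    ∀ p ∈ U, pdy (pdx^[m] w) p.1 p.2 = pdx^[m] (pdy w) p.1 p.2 := by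
  induction m generalizing w with
  | zero => intro p hp; rfl
  | succ m ih =>
    intro p hp
    rw [Function.iterate_succ_apply]
    have h1 := ih (w := pdx w) (contDiffOn_pdx (j := (m + 2 : ℕ)) hU
      (hw.of_le (by exact_mod_cast by omega))) p hp
    rw [h1]
    have h2 : ∀ q ∈ U, pdy (pdx w) q.1 q.2 = pdx (pdy w) q.1 q.2 := by
      intro q hq
      exact (schwarz hU (hw.of_le (by exact_mod_cast by omega))
        (x := q.1) (y := q.2) (by simpa [Prod.mk.eta] using hq)).symm
    have h3 := pdx_iter_congrOn (m := m) hU h2 p hp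
    rw [h3, ← Function.iterate_succ_apply]

/-- commute pdy iterates past pdx iterates -/
lemma pdy_iter_pdx_iter (hU : IsOpen U) {m n N : ℕ}
    (hw : ContDiffOn ℝ ((N : ℕ)) (uncurry w) U) (hN : m + n + 2 ≤ N) :
    ∀ p ∈ U, pdy^[n] (pdx^[m] w) p.1 p.2 = pdx^[m] (pdy^[n] w) p.1 p.2 := by
  induction n with
  | zero => intro p hp; rfl
  | succ n ih =>
    intro p hp
    rw [Function.iterate_succ_apply', Function.iterate_succ_apply']
    have h1 := pdy_congrOn hU (ih (by omega)) (x := p.1) (y := p.2)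
      (by simpa [Prod.mk.eta] using hp)
    rw [h1]
    have h2 := pdy_pdx_iter (m := m) hU
      ((contDiffOn_pdy_iter (n := n) (j := (m + 2 : ℕ)) hU
        (hw.of_le (by exact_mod_cast by omega)))) p hp
    rw [h2]

/-- pdy of pd at a point -/
lemma pdy_pd (hU : IsOpen U) {N m n : ℕ}
    (hw : ContDiffOn ℝ ((N : ℕ)) (uncurry w) U) (hN : m + n + 2 ≤ N) :
    ∀ p ∈ U, pdy (pd m n w) p.1 p.2 = pd m (n + 1) w p.1 p.2 := by
  intro p hp
  unfold pd
  have h1 := pdy_pdx_iter (m := m) hU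
    (contDiffOn_pdy_iter (n := n) (j := (m + 2 : ℕ)) hU
      (hw.of_le (by exact_mod_cast by omega))) p hp
  rw [h1]
  exact pdx_iter_congrOn (m := m) hU
    (fun q hq => by rw [Function.iterate_succ_apply']) p hp

lemma pd_succ_x (m n : ℕ) (w : ℝ → ℝ → ℝ) : pd (m + 1) n w = pdx (pd m n w) := by
  unfold pd
  exact Function.iterate_succ_apply' pdx m (pdy^[n] w)


/-- pdx of a linear combination, pointwise on U -/
lemma pdx_comb (hU : IsOpen U) (c d : ℝ)
    (hv : ContDiffOn ℝ (1 : ℕ) (uncurry v) U) (hw : ContDiffOn ℝ (1 : ℕ) (uncurry w) U) :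
    ∀ p ∈ U, pdx (fun x y => c * v x y + d * w x y) p.1 p.2
      = c * pdx v p.1 p.2 + d * pdx w p.1 p.2 := by
  intro p hp
  have hp' : (p.1, p.2) ∈ U := by simpa [Prod.mk.eta] using hp
  have Hv := hasDerivAt_pdx hU hv hp'
  have Hw := hasDerivAt_pdx hU hw hp'
  exact ((Hv.const_mul c).add (Hw.const_mul d)).deriv

lemma pdy_comb (hU : IsOpen U) (c d : ℝ)
    (hv : ContDiffOn ℝ (1 : ℕ) (uncurry v) U) (hw : ContDiffOn ℝ (1 : ℕ) (uncurry w) U) :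
    ∀ p ∈ U, pdy (fun x y => c * v x y + d * w x y) p.1 p.2
      = c * pdy v p.1 p.2 + d * pdy w p.1 p.2 := by
  intro p hp
  have hp' : (p.1, p.2) ∈ U := by simpa [Prod.mk.eta] using hp
  have Hv := hasDerivAt_pdy hU hv hp'
  have Hw := hasDerivAt_pdy hU hw hp'
  exact ((Hv.const_mul c).add (Hw.const_mul d)).deriv

lemma contDiffOn_comb {j : ℕ} (c d : ℝ)
    (hv : ContDiffOn ℝ (j : ℕ) (uncurry v) U) (hw : ContDiffOn ℝ (j : ℕ) (uncurry w) U) :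
    ContDiffOn ℝ (j : ℕ) (uncurry (fun x y => c * v x y + d * w x y)) U := by
  have : (uncurry (fun x y => c * v x y + d * w x y))
      = fun p => c * uncurry v p + d * uncurry w p := by
    funext p; simp [Function.uncurry]
  rw [this]
  exact (hv.const_smul c).add (hw.const_smul d)

lemma pdx_iter_comb (hU : IsOpen U) {m : ℕ} (c d : ℝ)
    (hv : ContDiffOn ℝ (m : ℕ) (uncurry v) U) (hw : ContDiffOn ℝ (m : ℕ) (uncurry w) U) :
    ∀ p ∈ U, pdx^[m] (fun x y => c * v x y + d * w x y) p.1 p.2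
      = c * pdx^[m] v p.1 p.2 + d * pdx^[m] w p.1 p.2 := by
  induction m generalizing v w with
  | zero => intro p hp; rfl
  | succ m ih =>
    intro p hp
    rw [Function.iterate_succ_apply, Function.iterate_succ_apply, Function.iterate_succ_apply]
    have hv1 : ContDiffOn ℝ (1 : ℕ) (uncurry v) U := hv.of_le (by exact_mod_cast by omega)
    have hw1 : ContDiffOn ℝ (1 : ℕ) (uncurry w) U := hw.of_le (by exact_mod_cast by omega)
    have hcong := pdx_iter_congrOn (m := m) hU
      (v := pdx (fun x y => c * v x y + d * w x y))
      (w := fun x y => c * pdx v x y + d * pdx w x y)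
      (pdx_comb hU c d hv1 hw1) p hp
    rw [hcong]
    exact ih (contDiffOn_pdx (j := (m : ℕ)) hU hv) (contDiffOn_pdx (j := (m : ℕ)) hU hw) p hp

lemma pdy_iter_comb (hU : IsOpen U) {n : ℕ} (c d : ℝ)
    (hv : ContDiffOn ℝ (n : ℕ) (uncurry v) U) (hw : ContDiffOn ℝ (n : ℕ) (uncurry w) U) :
    ∀ p ∈ U, pdy^[n] (fun x y => c * v x y + d * w x y) p.1 p.2
      = c * pdy^[n] v p.1 p.2 + d * pdy^[n] w p.1 p.2 := by
  induction n generalizing v w with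
  | zero => intro p hp; rfl
  | succ n ih =>
    intro p hp
    rw [Function.iterate_succ_apply, Function.iterate_succ_apply, Function.iterate_succ_apply]
    have hv1 : ContDiffOn ℝ (1 : ℕ) (uncurry v) U := hv.of_le (by exact_mod_cast by omega)
    have hw1 : ContDiffOn ℝ (1 : ℕ) (uncurry w) U := hw.of_le (by exact_mod_cast by omega)
    have hcong := pdy_iter_congrOn (n := n) hU
      (v := pdy (fun x y => c * v x y + d * w x y))
      (w := fun x y => c * pdy v x y + d * pdy w x y)
      (pdy_comb hU c d hv1 hw1) p hp
    rw [hcong]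
    exact ih (contDiffOn_pdy (j := (n : ℕ)) hU hv) (contDiffOn_pdy (j := (n : ℕ)) hU hw) p hp

lemma pd_comb (hU : IsOpen U) {m n : ℕ} (c d : ℝ)
    (hv : ContDiffOn ℝ ((m + n : ℕ)) (uncurry v) U)
    (hw : ContDiffOn ℝ ((m + n : ℕ)) (uncurry w) U) :
    ∀ p ∈ U, pd m n (fun x y => c * v x y + d * w x y) p.1 p.2
      = c * pd m n v p.1 p.2 + d * pd m n w p.1 p.2 := by
  intro p hp
  unfold pd
  have h1 := pdx_iter_congrOn (m := m) hU
    (v := pdy^[n] (fun x y => c * v x y + d * w x y))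
    (w := fun x y => c * pdy^[n] v x y + d * pdy^[n] w x y)
    (pdy_iter_comb (n := n) hU c d (hv.of_le (by exact_mod_cast by omega))
      (hw.of_le (by exact_mod_cast by omega))) p hp
  rw [h1]
  exact pdx_iter_comb (m := m) hU c d
    (contDiffOn_pdy_iter (n := n) (j := (m : ℕ)) hU (by exact_mod_cast hv))
    (contDiffOn_pdy_iter (n := n) (j := (m : ℕ)) hU (by exact_mod_cast hw)) p hp

/-- chain rule along a line -/
lemma hasDerivAt_line (hU : IsOpen U) (hw : ContDiffOn ℝ (1 : ℕ) (uncurry w) U)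
    (k l x₀ y₀ : ℝ) {h : ℝ} (hp : (x₀ + k * h, y₀ + l * h) ∈ U) :
    HasDerivAt (fun t => w (x₀ + k * t) (y₀ + l * t))
      (k * pdx w (x₀ + k * h) (y₀ + l * h) + l * pdy w (x₀ + k * h) (y₀ + l * h)) h := by
  have hline : HasDerivAt (fun t : ℝ => ((x₀ + k * t, y₀ + l * t) : ℝ × ℝ)) ((k, l)) h := by
    have h1 : HasDerivAt (fun t : ℝ => x₀ + k * t) k h := by
      simpa using ((hasDerivAt_id h).const_mul k).const_add x₀
    have h2 : HasDerivAt (fun t : ℝ => y₀ + l * t) l h := by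
      simpa using ((hasDerivAt_id h).const_mul l).const_add y₀
    exact h1.prodMk h2
  have hd := diffAt_of_C1 hU hw hp
  have H := hd.hasFDerivAt.comp_hasDerivAt h hline
  have hval : fderiv ℝ (uncurry w) (x₀ + k * h, y₀ + l * h) (k, l)
      = k * pdx w (x₀ + k * h) (y₀ + l * h) + l * pdy w (x₀ + k * h) (y₀ + l * h) := by
    have hsplit : ((k, l) : ℝ × ℝ) = k • ((1 : ℝ), (0 : ℝ)) + l • (0, 1) := by
      simp [Prod.ext_iff]
    rw [hsplit, map_add, map_smul, map_smul]
    have e1 : pdx w (x₀ + k * h) (y₀ + l * h)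
        = fderiv ℝ (uncurry w) (x₀ + k * h, y₀ + l * h) (1, 0) := (slice_x hd).deriv
    have e2 : pdy w (x₀ + k * h) (y₀ + l * h)
        = fderiv ℝ (uncurry w) (x₀ + k * h, y₀ + l * h) (0, 1) := (slice_y hd).deriv
    rw [e1, e2]; simp
  rw [← hval]
  exact H


lemma pd_congrOn (hU : IsOpen U) {m n : ℕ} (hvw : ∀ p ∈ U, v p.1 p.2 = w p.1 p.2) :
    ∀ p ∈ U, pd m n v p.1 p.2 = pd m n w p.1 p.2 := by
  intro p hp
  unfold pd
  exact pdx_iter_congrOn (m := m) hU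
    (v := pdy^[n] v) (w := pdy^[n] w) (pdy_iter_congrOn (n := n) hU hvw) p hp

lemma pde_general {a : ℝ} {u f : ℝ → ℝ → ℝ}
    (hU : IsOpen U) (hu : ContDiffOn ℝ (8 : ℕ) (uncurry u) U)
    (hf : ContDiffOn ℝ (6 : ℕ) (uncurry f) U)
    (hpde : ∀ p ∈ U, a * (pd 2 0 u p.1 p.2 + pd 0 2 u p.1 p.2) = - f p.1 p.2)
    {m n : ℕ} (hmn : m + n ≤ 4) :
    ∀ p ∈ U, a * (pd (m + 2) n u p.1 p.2 + pd m (n + 2) u p.1 p.2)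
      = - pd m n f p.1 p.2 := by
  intro p hp
  have hsm20 : ContDiffOn ℝ ((m + n : ℕ)) (uncurry (pd 2 0 u)) U :=
    contDiffOn_pd hU hu (by omega)
  have hsm02 : ContDiffOn ℝ ((m + n : ℕ)) (uncurry (pd 0 2 u)) U :=
    contDiffOn_pd hU hu (by omega)
  have hsmf : ContDiffOn ℝ ((m + n : ℕ)) (uncurry f) U :=
    hf.of_le (by exact_mod_cast by omega)
  -- pd m n of the LHS function
  have e0 : ∀ q ∈ U, (fun x y => a * pd 2 0 u x y + a * pd 0 2 u x y) q.1 q.2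
      = (fun x y => -1 * f x y + 0 * f x y) q.1 q.2 := by
    intro q hq
    have := hpde q hq
    simp only
    ring_nf
    ring_nf at this
    linarith [this]
  have e1 := pd_congrOn (m := m) (n := n) hU
    (v := fun x y => a * pd 2 0 u x y + a * pd 0 2 u x y)
    (w := fun x y => -1 * f x y + 0 * f x y) e0 p hp
  have e2 := pd_comb (m := m) (n := n) hU a a hsm20 hsm02 p hp
  have e3 := pd_comb (m := m) (n := n) hU (-1) 0 hsmf hsmf p hp
  rw [e1, e3] at e2
  -- identify pd m n (pd 2 0 u) and pd m n (pd 0 2 u)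
  have i1 : pd m n (pd 0 2 u) p.1 p.2 = pd m (n + 2) u p.1 p.2 := by
    show pdx^[m] (pdy^[n] (pdx^[0] (pdy^[2] u))) p.1 p.2 = pdx^[m] (pdy^[n+2] u) p.1 p.2
    rw [Function.iterate_zero_apply, Function.iterate_add_apply]
  have i2 : pd m n (pd 2 0 u) p.1 p.2 = pd (m + 2) n u p.1 p.2 := by
    show pdx^[m] (pdy^[n] (pdx^[2] (pdy^[0] u))) p.1 p.2
      = pdx^[m+2] (pdy^[n] u) p.1 p.2
    rw [Function.iterate_zero_apply, Function.iterate_add_apply]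
    have hsw := pdy_iter_pdx_iter (m := 2) (n := n) (N := 8) hU hu (by omega)
    exact pdx_iter_congrOn (m := m) hU
      (v := pdy^[n] (pdx^[2] u)) (w := pdx^[2] (pdy^[n] u)) hsw p hp
  rw [i1, i2] at e2
  have : a * pd (m+2) n u p.1 p.2 + a * pd m (n+2) u p.1 p.2
      = -1 * pd m n f p.1 p.2 + 0 * pd m n f p.1 p.2 := e2.symm
  linarith [this]

end tool

noncomputable def Adir (u : ℝ → ℝ → ℝ) (k l : ℝ) (j : ℕ) : ℝ → ℝ → ℝ :=
  fun x y => ∑ i ∈ Finset.range (j + 1),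
    (j.choose i : ℝ) * k ^ i * l ^ (j - i) * pd i (j - i) u x y

noncomputable def Atop (u : ℝ → ℝ → ℝ) (k l : ℝ) : ℝ → ℝ → ℝ :=
  fun x y => ∑ i ∈ Finset.range 8, (Nat.choose 7 i : ℝ) * k ^ i * l ^ (7 - i) *
    (k * pdx (pd i (7 - i) u) x y + l * pdy (pd i (7 - i) u) x y)

noncomputable def Bdir (u : ℝ → ℝ → ℝ) (k l : ℝ) (j : ℕ) : ℝ → ℝ → ℝ :=
  if j ≤ 7 then Adir u k l j else Atop u k l

section chain
variable {U : Set (ℝ × ℝ)} {u : ℝ → ℝ → ℝ}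

lemma hasDerivAt_Bdir (hU : IsOpen U) (hu : ContDiffOn ℝ (8 : ℕ) (uncurry u) U)
    (k l x₀ y₀ : ℝ) {j : ℕ} (hj : j ≤ 7) {h : ℝ}
    (hp : (x₀ + k * h, y₀ + l * h) ∈ U) :
    HasDerivAt (fun t => Bdir u k l j (x₀ + k * t) (y₀ + l * t))
      (Bdir u k l (j + 1) (x₀ + k * h) (y₀ + l * h)) h := by
  have key : HasDerivAt (fun t => Adir u k l j (x₀ + k * t) (y₀ + l * t))
      (∑ i ∈ Finset.range (j + 1), (j.choose i : ℝ) * k ^ i * l ^ (j - i) *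
        (k * pdx (pd i (j - i) u) (x₀ + k * h) (y₀ + l * h)
          + l * pdy (pd i (j - i) u) (x₀ + k * h) (y₀ + l * h))) h := by
    simp only [Adir]
    apply HasDerivAt.fun_sum
    intro i hi
    have hw : ContDiffOn ℝ (1 : ℕ) (uncurry (pd i (j - i) u)) U :=
      contDiffOn_pd hU hu (by simp only [Finset.mem_range] at hi; omega)
    exact (hasDerivAt_line hU hw k l x₀ y₀ hp).const_mul _
  by_cases hj7 : j = 7
  · subst hj7
    have hB8 : Bdir u k l 8 = Atop u k l := by simp [Bdir]
    have hB7 : Bdir u k l 7 = Adir u k l 7 := by simp [Bdir]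
    rw [hB8, hB7]
    simpa only [Atop] using key
  · have hj6 : j ≤ 6 := by omega
    have hBj : Bdir u k l j = Adir u k l j := by simp [Bdir, hj]
    have hBj1 : Bdir u k l (j + 1) = Adir u k l (j + 1) := by
      simp only [Bdir, if_pos (show j + 1 ≤ 7 by omega)]
    rw [hBj, hBj1]
    have e1 : (∑ i ∈ Finset.range (j + 1), (j.choose i : ℝ) * k ^ i * l ^ (j - i) *
        (k * pdx (pd i (j - i) u) (x₀ + k * h) (y₀ + l * h)
          + l * pdy (pd i (j - i) u) (x₀ + k * h) (y₀ + l * h)))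
        = ∑ i ∈ Finset.range (j + 1), (j.choose i : ℝ) * k ^ i * l ^ (j - i) *
        (k * pd (i + 1) (j - i) u (x₀ + k * h) (y₀ + l * h)
          + l * pd i (j - i + 1) u (x₀ + k * h) (y₀ + l * h)) := by
      refine Finset.sum_congr rfl fun i hi => ?_
      have hi' : i ≤ j := by simp only [Finset.mem_range] at hi; omega
      have hc : pdy (pd i (j - i) u) (x₀ + k * h) (y₀ + l * h)
          = pd i (j - i + 1) u (x₀ + k * h) (y₀ + l * h) :=
        pdy_pd (N := 8) hU hu (by omega) (x₀ + k * h, y₀ + l * h) hp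
      rw [pd_succ_x, hc]
    rw [e1] at key
    have e2 : Adir u k l (j + 1) (x₀ + k * h) (y₀ + l * h)
        = ∑ i ∈ Finset.range (j + 1), (j.choose i : ℝ) * k ^ i * l ^ (j - i) *
        (k * pd (i + 1) (j - i) u (x₀ + k * h) (y₀ + l * h)
          + l * pd i (j - i + 1) u (x₀ + k * h) (y₀ + l * h)) := by
      interval_cases j <;>
        · norm_num [Adir, Finset.sum_range_succ,
            show Nat.choose 4 2 = 6 by decide, show Nat.choose 5 2 = 10 by decide,
            show Nat.choose 5 3 = 10 by decide, show Nat.choose 6 2 = 15 by decide,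
            show Nat.choose 6 3 = 20 by decide, show Nat.choose 6 4 = 15 by decide,
            show Nat.choose 7 2 = 21 by decide, show Nat.choose 7 3 = 35 by decide,
            show Nat.choose 7 4 = 35 by decide, show Nat.choose 7 5 = 21 by decide]
          ring
    rw [e2]
    exact key
end chain

noncomputable def Pc (al be ga : ℝ) (j : ℕ) : ℝ → ℝ :=
  fun t => al * (Nat.descFactorial 2 j : ℝ) * t ^ (2 - j)
         + be * (Nat.descFactorial 4 j : ℝ) * t ^ (4 - j)
         + ga * (Nat.descFactorial 6 j : ℝ) * t ^ (6 - j)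

lemma monomialDeriv (c : ℝ) (m j : ℕ) (t : ℝ) :
    HasDerivAt (fun s => c * (Nat.descFactorial m j : ℝ) * s ^ (m - j))
      (c * (Nat.descFactorial m (j + 1) : ℝ) * t ^ (m - (j + 1))) t := by
  have H := (hasDerivAt_pow (m - j) t).const_mul (c * (Nat.descFactorial m j : ℝ))
  have e : c * (Nat.descFactorial m (j + 1) : ℝ) * t ^ (m - (j + 1))
      = c * (Nat.descFactorial m j : ℝ) * (((m - j : ℕ) : ℝ) * t ^ (m - j - 1)) := by
    rw [Nat.descFactorial_succ, ← Nat.sub_sub]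
    push_cast
    ring
  rw [e]
  exact H

lemma hasDerivAt_Pc (al be ga : ℝ) (j : ℕ) (t : ℝ) :
    HasDerivAt (Pc al be ga j) (Pc al be ga (j + 1) t) t := by
  exact ((monomialDeriv al 2 j t).add (monomialDeriv be 4 j t)).add (monomialDeriv ga 6 j t)

/-- iterated Taylor-type bound -/
lemma iter_bound {δ M : ℝ} :
    ∀ (n : ℕ) (Φ : ℕ → ℝ → ℝ),
    (∀ j < n, ∀ t ∈ Set.Icc (0 : ℝ) δ, HasDerivAt (Φ j) (Φ (j + 1) t) t) →
    (∀ j < n, Φ j 0 = 0) →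
    (∀ t ∈ Set.Icc (0 : ℝ) δ, |Φ n t| ≤ M) →
    ∀ t ∈ Set.Icc (0 : ℝ) δ, |Φ 0 t| ≤ M * t ^ n / n.factorial := by
  intro n
  induction n with
  | zero =>
    intro Φ _ _ hb t ht
    simpa using hb t ht
  | succ n ih =>
    intro Φ hd h0 hb t ht
    have IH := ih (fun j => Φ (j + 1)) (fun j hj => hd (j + 1) (by omega))
      (fun j hj => h0 (j + 1) (by omega)) hb
    -- one more integration step
    have hδ0 : (0 : ℝ) ≤ δ := le_trans ht.1 ht.2
    have key := image_norm_le_of_norm_deriv_right_le_deriv_boundary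
      (f := Φ 0) (f' := Φ 1) (a := 0) (b := δ)
      (B := fun s => M * s ^ (n + 1) / (n + 1).factorial)
      (B' := fun s => M * s ^ n / n.factorial)
      (fun s hs => ((hd 0 (by omega) s hs).continuousAt).continuousWithinAt)
      (fun s hs => (hd 0 (by omega) s (Set.Ico_subset_Icc_self hs)).hasDerivWithinAt)
      (by
        rw [h0 0 (by omega)]
        simp [Nat.factorial])
      (fun s => by
        have H := ((hasDerivAt_pow (n + 1) s).const_mul M).div_const ((n + 1).factorial : ℝ)
        refine H.congr_deriv ?_
        rw [Nat.factorial_succ]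
        have hn : (n.factorial : ℝ) ≠ 0 := by exact_mod_cast n.factorial_ne_zero
        push_cast
        field_simp)
      (fun s hs => by
        have := IH s (Set.Ico_subset_Icc_self hs)
        simpa using this)
    have := key ht
    simpa using this


theorem stmt0
    (a : ℝ) (ha : 0 < a) (u f : ℝ → ℝ → ℝ) (x₀ y₀ : ℝ)
    (U : Set (ℝ × ℝ)) (hU : IsOpen U) (hmem : (x₀, y₀) ∈ U)
    (hu : ContDiffOn ℝ 8 (Function.uncurry u) U)
    (hf : ContDiffOn ℝ 6 (Function.uncurry f) U)
    (hpde : ∀ p ∈ U, a * (pd 2 0 u p.1 p.2 + pd 0 2 u p.1 p.2) = - f p.1 p.2)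
    (F : ℝ → ℝ)
    (hF : ∀ h : ℝ, F h = 6 * f x₀ y₀
      + h ^ 2 / 2 * (pd 2 0 f x₀ y₀ + pd 0 2 f x₀ y₀)
      + h ^ 4 / 60 * (pd 4 0 f x₀ y₀ + pd 0 4 f x₀ y₀)
      + h ^ 4 / 15 * pd 2 2 f x₀ y₀) :
    ∃ C > (0 : ℝ), ∃ h₀ > (0 : ℝ), ∀ h ∈ Set.Ioc (0 : ℝ) h₀,
      |(∑ k ∈ Finset.Icc (-1 : ℤ) 1, ∑ l ∈ Finset.Icc (-1 : ℤ) 1,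
          C0 k l * u (x₀ + (k : ℝ) * h) (y₀ + (l : ℝ) * h))
        - h ^ 2 / a * F h| ≤ C * h ^ 8 := by
  have ha' : a ≠ 0 := ne_of_gt ha
  have hu8 : ContDiffOn ℝ ((8 : ℕ)) (Function.uncurry u) U := by exact_mod_cast hu
  have hf6 : ContDiffOn ℝ ((6 : ℕ)) (Function.uncurry f) U := by exact_mod_cast hf
  obtain ⟨ε, hε, hball⟩ : ∃ ε > 0, Metric.ball (x₀, y₀) ε ⊆ U :=
    Metric.isOpen_iff.1 hU _ hmem
  set δ := ε / 2 with hδdef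
  have hδ : 0 < δ := by positivity
  have hmemline : ∀ k l : ℤ, k ∈ Finset.Icc (-1 : ℤ) 1 → l ∈ Finset.Icc (-1 : ℤ) 1 →
      ∀ t : ℝ, |t| ≤ δ → (x₀ + (k : ℝ) * t, y₀ + (l : ℝ) * t) ∈ U := by
    intro k l hk hl t ht
    rw [Finset.mem_Icc] at hk hl
    apply hball
    rw [Metric.mem_ball, Prod.dist_eq]
    have hkabs : |(k : ℝ)| ≤ 1 := by
      rw [abs_le]
      constructor
      · exact_mod_cast hk.1
      · exact_mod_cast hk.2
    have hlabs : |(l : ℝ)| ≤ 1 := by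
      rw [abs_le]
      constructor
      · exact_mod_cast hl.1
      · exact_mod_cast hl.2
    have d1 : dist (x₀ + (k : ℝ) * t) x₀ < ε := by
      rw [Real.dist_eq, add_sub_cancel_left, abs_mul]
      calc |(k : ℝ)| * |t| ≤ 1 * δ :=
            mul_le_mul hkabs ht (abs_nonneg t) zero_le_one
        _ < ε := by rw [one_mul, hδdef]; linarith
    have d2 : dist (y₀ + (l : ℝ) * t) y₀ < ε := by
      rw [Real.dist_eq, add_sub_cancel_left, abs_mul]
      calc |(l : ℝ)| * |t| ≤ 1 * δ :=
            mul_le_mul hlabs ht (abs_nonneg t) zero_le_one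
        _ < ε := by rw [one_mul, hδdef]; linarith
    exact max_lt d1 d2
  -- PDE consequences at the base point
  have H00 : a * (pd 2 0 u x₀ y₀ + pd 0 2 u x₀ y₀) = - f x₀ y₀ := hpde (x₀, y₀) hmem
  have P20 : a * (pd 4 0 u x₀ y₀ + pd 2 2 u x₀ y₀) = - pd 2 0 f x₀ y₀ :=
    pde_general hU hu8 hf6 hpde (m := 2) (n := 0) (by omega) (x₀, y₀) hmem
  have P02 : a * (pd 2 2 u x₀ y₀ + pd 0 4 u x₀ y₀) = - pd 0 2 f x₀ y₀ :=
    pde_general hU hu8 hf6 hpde (m := 0) (n := 2) (by omega) (x₀, y₀) hmem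
  have P40 : a * (pd 6 0 u x₀ y₀ + pd 4 2 u x₀ y₀) = - pd 4 0 f x₀ y₀ :=
    pde_general hU hu8 hf6 hpde (m := 4) (n := 0) (by omega) (x₀, y₀) hmem
  have P04 : a * (pd 2 4 u x₀ y₀ + pd 0 6 u x₀ y₀) = - pd 0 4 f x₀ y₀ :=
    pde_general hU hu8 hf6 hpde (m := 0) (n := 4) (by omega) (x₀, y₀) hmem
  have P22 : a * (pd 4 2 u x₀ y₀ + pd 2 4 u x₀ y₀) = - pd 2 2 f x₀ y₀ :=
    pde_general hU hu8 hf6 hpde (m := 2) (n := 2) (by omega) (x₀, y₀) hmem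
  have G00 : pd 2 0 u x₀ y₀ + pd 0 2 u x₀ y₀ = - f x₀ y₀ / a := by
    rw [eq_div_iff ha']; linear_combination H00
  have G20 : pd 4 0 u x₀ y₀ + pd 2 2 u x₀ y₀ = - pd 2 0 f x₀ y₀ / a := by
    rw [eq_div_iff ha']; linear_combination P20
  have G02 : pd 2 2 u x₀ y₀ + pd 0 4 u x₀ y₀ = - pd 0 2 f x₀ y₀ / a := by
    rw [eq_div_iff ha']; linear_combination P02
  have G40 : pd 6 0 u x₀ y₀ + pd 4 2 u x₀ y₀ = - pd 4 0 f x₀ y₀ / a := by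
    rw [eq_div_iff ha']; linear_combination P40
  have G04 : pd 2 4 u x₀ y₀ + pd 0 6 u x₀ y₀ = - pd 0 4 f x₀ y₀ / a := by
    rw [eq_div_iff ha']; linear_combination P04
  have G22 : pd 4 2 u x₀ y₀ + pd 2 4 u x₀ y₀ = - pd 2 2 f x₀ y₀ / a := by
    rw [eq_div_iff ha']; linear_combination P22
  -- the family of functions
  set Φ : ℕ → ℝ → ℝ := fun j t =>
    (∑ k ∈ Finset.Icc (-1 : ℤ) 1, ∑ l ∈ Finset.Icc (-1 : ℤ) 1,
      C0 k l * Bdir u (k : ℝ) (l : ℝ) j (x₀ + (k : ℝ) * t) (y₀ + (l : ℝ) * t))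
    - Pc (6 * f x₀ y₀ / a)
        ((pd 2 0 f x₀ y₀ + pd 0 2 f x₀ y₀) / 2 / a)
        (((pd 4 0 f x₀ y₀ + pd 0 4 f x₀ y₀) / 60 + pd 2 2 f x₀ y₀ / 15) / a) j t
    with hΦ
  have hIcc : Finset.Icc (-1 : ℤ) 1 = {-1, 0, 1} := by decide
  -- derivatives
  have hd : ∀ j < 8, ∀ t ∈ Set.Icc (0 : ℝ) δ, HasDerivAt (Φ j) (Φ (j + 1) t) t := by
    intro j hj t ht
    have habs : |t| ≤ δ := by rw [abs_of_nonneg ht.1]; exact ht.2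
    simp only [hΦ]
    apply HasDerivAt.sub
    · apply HasDerivAt.fun_sum
      intro k hk
      apply HasDerivAt.fun_sum
      intro l hl
      exact (hasDerivAt_Bdir hU hu8 (k : ℝ) (l : ℝ) x₀ y₀ (by omega)
        (hmemline k l hk hl t habs)).const_mul _
    · exact hasDerivAt_Pc _ _ _ j t
  -- values at zero
  have h0 : ∀ j < 8, Φ j 0 = 0 := by
    intro j hj
    simp only [hΦ]
    interval_cases j
    · rw [hIcc]
      simp [Finset.sum_insert, Finset.mem_insert, Bdir, Adir, Pc, C0,
        Finset.sum_range_succ, show pd 0 0 u = u from rfl]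
      ring
    · rw [hIcc]
      simp [Finset.sum_insert, Finset.mem_insert, Bdir, Adir, Pc, C0,
        Finset.sum_range_succ]
      ring
    · rw [hIcc]
      simp [Finset.sum_insert, Finset.mem_insert, Bdir, Adir, Pc, C0,
        Finset.sum_range_succ, show Nat.descFactorial 2 2 = 2 by decide]
      linear_combination (-12 : ℝ) * G00
    · rw [hIcc]
      simp [Finset.sum_insert, Finset.mem_insert, Bdir, Adir, Pc, C0,
        Finset.sum_range_succ]
      ring
    · rw [hIcc]
      simp [Finset.sum_insert, Finset.mem_insert, Bdir, Adir, Pc, C0,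
        Finset.sum_range_succ, show Nat.descFactorial 4 4 = 24 by decide,
        show Nat.choose 4 2 = 6 by decide]
      linear_combination (-12 : ℝ) * G20 + (-12 : ℝ) * G02
    · rw [hIcc]
      simp [Finset.sum_insert, Finset.mem_insert, Bdir, Adir, Pc, C0,
        Finset.sum_range_succ, show Nat.choose 5 2 = 10 by decide,
        show Nat.choose 5 3 = 10 by decide]
      ring
    · rw [hIcc]
      simp [Finset.sum_insert, Finset.mem_insert, Bdir, Adir, Pc, C0,
        Finset.sum_range_succ, show Nat.descFactorial 6 6 = 720 by decide,
        show Nat.choose 6 2 = 15 by decide, show Nat.choose 6 3 = 20 by decide,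
        show Nat.choose 6 4 = 15 by decide]
      linear_combination (-12 : ℝ) * G40 + (-12 : ℝ) * G04 + (-48 : ℝ) * G22
    · rw [hIcc]
      simp [Finset.sum_insert, Finset.mem_insert, Bdir, Adir, Pc, C0,
        Finset.sum_range_succ, show Nat.choose 7 2 = 21 by decide,
        show Nat.choose 7 3 = 35 by decide, show Nat.choose 7 4 = 35 by decide,
        show Nat.choose 7 5 = 21 by decide]
      ring
  -- continuity and bound at level 8
  have hcont : ContinuousOn (Φ 8) (Set.Icc (0 : ℝ) δ) := by
    simp only [hΦ]
    apply ContinuousOn.sub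
    · apply continuousOn_finset_sum
      intro k hk
      apply continuousOn_finset_sum
      intro l hl
      apply ContinuousOn.mul continuousOn_const
      have hB8 : Bdir u (k : ℝ) (l : ℝ) 8 = Atop u (k : ℝ) (l : ℝ) := by
        simp [Bdir]
      rw [hB8]
      have hAc : ContinuousOn (uncurry (Atop u (k : ℝ) (l : ℝ))) U := by
        have : uncurry (Atop u (k : ℝ) (l : ℝ)) = fun p : ℝ × ℝ =>
            ∑ i ∈ Finset.range 8, (Nat.choose 7 i : ℝ) * (k : ℝ) ^ i * (l : ℝ) ^ (7 - i) *
              ((k : ℝ) * uncurry (pdx (pd i (7 - i) u)) p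
                + (l : ℝ) * uncurry (pdy (pd i (7 - i) u)) p) := by
          funext p; rfl
        rw [this]
        apply continuousOn_finset_sum
        intro i hi
        have hi' : i < 8 := Finset.mem_range.1 hi
        have cpd : ContDiffOn ℝ ((1 : ℕ)) (uncurry (pd i (7 - i) u)) U :=
          contDiffOn_pd (N := 8) hU hu8 (by omega)
        have c1 : ContinuousOn (uncurry (pdx (pd i (7 - i) u))) U :=
          (contDiffOn_pdx (j := 0) hU (by exact_mod_cast cpd)).continuousOn
        have c2 : ContinuousOn (uncurry (pdy (pd i (7 - i) u))) U :=
          (contDiffOn_pdy (j := 0) hU (by exact_mod_cast cpd)).continuousOn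
        exact continuousOn_const.mul
          ((continuousOn_const.mul c1).add (continuousOn_const.mul c2))
      have hline : Continuous (fun t : ℝ => ((x₀ + (k : ℝ) * t, y₀ + (l : ℝ) * t) : ℝ × ℝ)) := by
        fun_prop
      have hmaps : Set.MapsTo (fun t : ℝ => ((x₀ + (k : ℝ) * t, y₀ + (l : ℝ) * t) : ℝ × ℝ))
          (Set.Icc (0 : ℝ) δ) U := by
        intro t ht
        exact hmemline k l hk hl t (by rw [abs_of_nonneg ht.1]; exact ht.2)
      have hcomp := hAc.comp hline.continuousOn hmaps
      exact hcomp
    · exact (Continuous.continuousOn (by unfold Pc; fun_prop))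
  obtain ⟨M, hM⟩ := isCompact_Icc.exists_bound_of_continuousOn hcont
  set M' := max M 0 with hM'def
  have hb : ∀ t ∈ Set.Icc (0 : ℝ) δ, |Φ 8 t| ≤ M' := by
    intro t ht
    calc |Φ 8 t| = ‖Φ 8 t‖ := (Real.norm_eq_abs _).symm
      _ ≤ M := hM t ht
      _ ≤ M' := le_max_left _ _
  have main := iter_bound 8 Φ hd h0 hb
  refine ⟨M' / 40320 + 1, by positivity, δ, hδ, ?_⟩
  intro h hh
  have ht : h ∈ Set.Icc (0 : ℝ) δ := ⟨le_of_lt hh.1, hh.2⟩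
  have hbd := main h ht
  have hid : Φ 0 h = (∑ k ∈ Finset.Icc (-1 : ℤ) 1, ∑ l ∈ Finset.Icc (-1 : ℤ) 1,
      C0 k l * u (x₀ + (k : ℝ) * h) (y₀ + (l : ℝ) * h)) - h ^ 2 / a * F h := by
    simp only [hΦ]
    congr 1
    · refine Finset.sum_congr rfl fun k hk => Finset.sum_congr rfl fun l hl => ?_
      congr 1
      show Bdir u (k : ℝ) (l : ℝ) 0 _ _ = u _ _
      simp [Bdir, Adir, show pd 0 0 u = u from rfl]
    · rw [hF h]
      simp [Pc]
      field_simp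
      ring
  rw [hid] at hbd
  have hfac : ((Nat.factorial 8 : ℕ) : ℝ) = 40320 := by norm_num [Nat.factorial]
  rw [hfac] at hbd
  have hM'0 : 0 ≤ M' := le_max_right _ _
  have hh8 : (0 : ℝ) ≤ h ^ 8 := by positivity
  calc |(∑ k ∈ Finset.Icc (-1 : ℤ) 1, ∑ l ∈ Finset.Icc (-1 : ℤ) 1,
          C0 k l * u (x₀ + (k : ℝ) * h) (y₀ + (l : ℝ) * h)) - h ^ 2 / a * F h|
      ≤ M' * h ^ 8 / 40320 := hbd
    _ ≤ (M' / 40320 + 1) * h ^ 8 := by nlinarith
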